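/- Let F be a finite field with q elements and characteristic different from 2. The number of x ∈ GL_4(F) with x² = 1 and rank(x - 1) = 1 equals q³(q² + 1)(q + 1). -/

import Mathlib

open Matrix Module

section aux
set_option linter.unusedSectionVars false
variable {F : Type*} [Field F] [Fintype F] [DecidableEq F]

-- square of a rank-one matrix
lemma aux_vmv_sq (v w : Fin 4 → F) :
    vecMulVec v w * vecMulVec v w = (w ⬝ᵥ v) • vecMulVec v w := by
  ext i j
  simp only [mul_apply, vecMulVec_apply, Matrix.smul_apply, smul_eq_mul, dotProduct,
    Finset.mul_sum, Finset.sum_mul]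
  apply Finset.sum_congr rfl
  intro k _
  ring

-- rank of vecMulVec
lemma aux_vmv_rank (v w : Fin 4 → F) (hv : v ≠ 0) (hw : w ≠ 0) :
    (vecMulVec v w).rank = 1 := by
  have hmv : ∀ x, (vecMulVec v w).mulVec x = (w ⬝ᵥ x) • v := by
    intro x
    ext i
    simp only [mulVec, vecMulVec_apply, dotProduct, Pi.smul_apply, smul_eq_mul,
      Finset.sum_mul, of_apply]
    apply Finset.sum_congr rfl
    intro k _
    ring
  obtain ⟨j, hj⟩ : ∃ j, w j ≠ 0 := by
    by_contra h
    push_neg at h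
    exact hw (funext h)
  have hrange : LinearMap.range (vecMulVec v w).mulVecLin = Submodule.span F {v} := by
    apply le_antisymm
    · rintro y ⟨x, rfl⟩
      rw [mulVecLin_apply, hmv]
      exact Submodule.smul_mem _ _ (Submodule.mem_span_singleton_self v)
    · rw [Submodule.span_le, Set.singleton_subset_iff]
      refine ⟨Pi.single j (w j)⁻¹, ?_⟩
      rw [mulVecLin_apply, hmv, dotProduct_single, mul_inv_cancel₀ hj, one_smul]
  rw [Matrix.rank, hrange, finrank_span_singleton hv]


-- decomposition of a rank-one matrix
lemma aux_rank_one_decomp (M : Matrix (Fin 4) (Fin 4) F) (h : M.rank = 1) :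
    ∃ v w : Fin 4 → F, v ≠ 0 ∧ M = vecMulVec v w := by
  have hM : M ≠ 0 := by
    rintro rfl
    simp [Matrix.rank_zero] at h
  obtain ⟨i₀, j₀, hij⟩ : ∃ i j, M i j ≠ 0 := by
    by_contra hc
    push_neg at hc
    exact hM (by ext i j; simpa using hc i j)
  set u : Fin 4 → F := fun i => M i j₀ with hu
  have hu0 : u ≠ 0 := fun hc => hij (by simpa [hu] using congrFun hc i₀)
  have humem : u ∈ LinearMap.range M.mulVecLin := by
    refine ⟨Pi.single j₀ 1, ?_⟩
    rw [mulVecLin_apply, mulVec_single]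
    ext i; simp [hu]
  have hspan : Submodule.span F {u} = LinearMap.range M.mulVecLin := by
    apply Submodule.eq_of_le_of_finrank_le
    · rwa [Submodule.span_le, Set.singleton_subset_iff]
    · rw [show finrank F ↥(LinearMap.range M.mulVecLin) = M.rank from rfl, h,
        finrank_span_singleton hu0]
  have hcol : ∀ j, ∃ a : F, (fun i => M i j) = a • u := by
    intro j
    have : (fun i => M i j) ∈ Submodule.span F {u} := by
      rw [hspan]
      refine ⟨Pi.single j 1, ?_⟩
      rw [mulVecLin_apply, mulVec_single]
      ext i; simp
    obtain ⟨a, ha⟩ := Submodule.mem_span_singleton.mp this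
    exact ⟨a, ha.symm⟩
  choose a ha using hcol
  refine ⟨u, a, hu0, ?_⟩
  ext i j
  have := congrFun (ha j) i
  simp only [Pi.smul_apply, smul_eq_mul] at this
  rw [vecMulVec_apply, this, mul_comm]

lemma aux_dot_nz {v w : Fin 4 → F} (h2 : (2:F) ≠ 0) (hd : w ⬝ᵥ v = 2) :
    v ≠ 0 ∧ w ≠ 0 := by
  constructor
  · rintro rfl; rw [dotProduct_zero] at hd; exact h2 hd.symm
  · rintro rfl; rw [zero_dotProduct] at hd; exact h2 hd.symm

lemma aux_mem (h2 : (2:F) ≠ 0) (v w : Fin 4 → F) (hd : w ⬝ᵥ v = 2) :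
    (1 - vecMulVec v w) * (1 - vecMulVec v w) = 1 ∧
      ((1 - vecMulVec v w) - 1).rank = 1 := by
  obtain ⟨hv, hw⟩ := aux_dot_nz h2 hd
  constructor
  · have hA : vecMulVec v w * vecMulVec v w = (2:F) • vecMulVec v w := by
      rw [aux_vmv_sq, hd]
    calc (1 - vecMulVec v w) * (1 - vecMulVec v w)
        = 1 - vecMulVec v w - vecMulVec v w + vecMulVec v w * vecMulVec v w := by
          noncomm_ring
      _ = 1 := by rw [hA]; module
  · have : (1 - vecMulVec v w) - 1 = vecMulVec (-v) w := by
      ext i j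
      simp [vecMulVec_apply]
    rw [this]
    exact aux_vmv_rank _ _ (neg_ne_zero.mpr hv) hw

lemma aux_surj (h2 : (2:F) ≠ 0) (x : Matrix (Fin 4) (Fin 4) F) (hx1 : x * x = 1)
    (hx2 : (x - 1).rank = 1) :
    ∃ v w : Fin 4 → F, w ⬝ᵥ v = 2 ∧ x = 1 - vecMulVec v w := by
  obtain ⟨u, a, hu0, hM⟩ := aux_rank_one_decomp (x - 1) hx2
  have hV0 : vecMulVec u a ≠ 0 := by
    rw [← hM]
    intro hc
    rw [hc, Matrix.rank_zero] at hx2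
    exact one_ne_zero hx2.symm
  have hsq : vecMulVec u a * vecMulVec u a = (-2 : F) • vecMulVec u a := by
    rw [← hM]
    have h1 : (x - 1) * (x - 1) = x * x - x - x + 1 := by noncomm_ring
    rw [hx1] at h1
    rw [h1]; module
  have hdot : a ⬝ᵥ u = -2 := by
    rw [aux_vmv_sq] at hsq
    have : (a ⬝ᵥ u - (-2 : F)) • vecMulVec u a = 0 := by
      rw [sub_smul, hsq, sub_self]
    rcases smul_eq_zero.mp this with h | h
    · linear_combination h
    · exact absurd h hV0
  refine ⟨-u, a, ?_, ?_⟩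
  · rw [dotProduct_neg, hdot, neg_neg]
  · have : vecMulVec (-u) a = -vecMulVec u a := by
      ext i j; simp [vecMulVec_apply]
    rw [this, sub_neg_eq_add, ← hM]
    abel

lemma aux_scale (h2 : (2:F) ≠ 0) {v w v' w' : Fin 4 → F} (hd : w ⬝ᵥ v = 2)
    (hd' : w' ⬝ᵥ v' = 2) (heq : vecMulVec v w = vecMulVec v' w') :
    ∃ c : F, c ≠ 0 ∧ v' = c • v ∧ w' = c⁻¹ • w := by
  obtain ⟨hv, hw⟩ := aux_dot_nz h2 hd
  obtain ⟨hv', hw'⟩ := aux_dot_nz h2 hd'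
  have hent : ∀ i j, v i * w j = v' i * w' j := by
    intro i j
    have := congrFun (congrFun heq i) j
    simpa [vecMulVec_apply] using this
  obtain ⟨j₁, hj₁⟩ : ∃ j, w j ≠ 0 := by
    by_contra h; push_neg at h; exact hw (funext h)
  obtain ⟨i₁, hi₁⟩ : ∃ i, v i ≠ 0 := by
    by_contra h; push_neg at h; exact hv (funext h)
  have hwj' : w' j₁ ≠ 0 := by
    intro hc
    apply hv
    funext i
    have := hent i j₁
    rw [hc, mul_zero] at this
    exact (mul_eq_zero.mp this).resolve_right hj₁
  refine ⟨w j₁ / w' j₁, div_ne_zero hj₁ hwj', ?_, ?_⟩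
  · funext i
    have h := hent i j₁
    rw [Pi.smul_apply, smul_eq_mul, div_mul_eq_mul_div, eq_div_iff hwj']
    linear_combination -h
  · funext j
    have h1 := hent i₁ j
    have h2 := hent i₁ j₁
    rw [Pi.smul_apply, smul_eq_mul, inv_div, div_mul_eq_mul_div, eq_div_iff hj₁]
    have hc := mul_left_cancel₀ hi₁ (show v i₁ * (w' j * w j₁) = v i₁ * (w' j₁ * w j) by
      linear_combination w' j * h2 - w' j₁ * h1)
    linear_combination hc

lemma aux_card_fiber (v : Fin 4 → F) (hv : v ≠ 0) :
    Fintype.card {w : Fin 4 → F // w ⬝ᵥ v = 2} = Fintype.card F ^ 3 := by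
  classical
  obtain ⟨i₀, hi₀⟩ : ∃ i, v i ≠ 0 := by
    by_contra h; push_neg at h; exact hv (funext h)
  set φ : (Fin 4 → F) →ₗ[F] F :=
    { toFun := fun w => w ⬝ᵥ v
      map_add' := fun a b => add_dotProduct a b v
      map_smul' := fun c a => smul_dotProduct c a v } with hφ
  have hsurj : Function.Surjective φ := by
    intro a
    refine ⟨Pi.single i₀ (a * (v i₀)⁻¹), ?_⟩
    simp only [hφ, LinearMap.coe_mk, AddHom.coe_mk, single_dotProduct]
    field_simp
  have hker : finrank F (LinearMap.ker φ) = 3 := by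
    have h1 := LinearMap.finrank_range_add_finrank_ker φ
    rw [LinearMap.range_eq_top.mpr hsurj, finrank_top, Module.finrank_self,
      Module.finrank_fin_fun] at h1
    omega
  set w₂ : Fin 4 → F := Pi.single i₀ (2 * (v i₀)⁻¹) with hw₂
  have hw₂d : w₂ ⬝ᵥ v = 2 := by
    simp only [hw₂, single_dotProduct]
    field_simp
  have e1 : {w : Fin 4 → F // w ⬝ᵥ v = 2} ≃ {w : Fin 4 → F // w ⬝ᵥ v = 0} :=
    { toFun := fun w => ⟨w.1 - w₂, by rw [sub_dotProduct, w.2, hw₂d, sub_self]⟩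
      invFun := fun w => ⟨w.1 + w₂, by rw [add_dotProduct, w.2, hw₂d, zero_add]⟩
      left_inv := fun w => by ext; simp
      right_inv := fun w => by ext; simp }
  have e2 : {w : Fin 4 → F // w ⬝ᵥ v = 0} ≃ LinearMap.ker φ :=
    Equiv.subtypeEquivRight fun w => by
      simp only [LinearMap.mem_ker, hφ, LinearMap.coe_mk, AddHom.coe_mk]
  rw [Fintype.card_congr (e1.trans e2), ← hker]
  exact card_eq_pow_finrank (K := F)

lemma aux_card_P (h2 : (2:F) ≠ 0) :
    Nat.card {p : (Fin 4 → F) × (Fin 4 → F) // p.2 ⬝ᵥ p.1 = 2} =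
      (Fintype.card F ^ 4 - 1) * Fintype.card F ^ 3 := by
  have e : {p : (Fin 4 → F) × (Fin 4 → F) // p.2 ⬝ᵥ p.1 = 2} ≃
      Σ v : {v : Fin 4 → F // v ≠ 0}, {w : Fin 4 → F // w ⬝ᵥ (v : Fin 4 → F) = 2} :=
    { toFun := fun p => ⟨⟨p.1.1, (aux_dot_nz h2 p.2).1⟩, ⟨p.1.2, p.2⟩⟩
      invFun := fun q => ⟨(q.1.1, q.2.1), q.2.2⟩
      left_inv := fun p => rfl
      right_inv := fun q => rfl }
  rw [Nat.card_congr e, Nat.card_eq_fintype_card, Fintype.card_sigma]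
  have : ∀ v : {v : Fin 4 → F // v ≠ 0},
      Fintype.card {w : Fin 4 → F // w ⬝ᵥ (v : Fin 4 → F) = 2} = Fintype.card F ^ 3 :=
    fun v => aux_card_fiber v.1 v.2
  rw [Finset.sum_congr rfl fun v _ => this v, Finset.sum_const, smul_eq_mul]
  congr 1
  rw [Finset.card_univ]
  have : Fintype.card {v : Fin 4 → F // v ≠ 0} =
      Fintype.card (Fin 4 → F) - Fintype.card {v : Fin 4 → F // v = 0} := by
    classical
    exact Fintype.card_subtype_compl _
  rw [this, Fintype.card_subtype_eq, Fintype.card_fun, Fintype.card_fin]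

lemma aux_fiber_equiv (h2 : (2:F) ≠ 0) (x : Matrix (Fin 4) (Fin 4) F) (hx1 : x * x = 1)
    (hx2 : (x - 1).rank = 1) :
    Nonempty (Fˣ ≃ {p : {p : (Fin 4 → F) × (Fin 4 → F) // p.2 ⬝ᵥ p.1 = 2} //
      1 - vecMulVec p.1.1 p.1.2 = x}) := by
  obtain ⟨v₀, w₀, hd₀, hx⟩ := aux_surj h2 x hx1 hx2
  obtain ⟨hv₀, hw₀⟩ := aux_dot_nz h2 hd₀
  obtain ⟨i₀, hi₀⟩ : ∃ i, v₀ i ≠ 0 := by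
    by_contra h; push_neg at h; exact hv₀ (funext h)
  have hdotc : ∀ c : Fˣ, ((c⁻¹ : Fˣ) : F) • w₀ ⬝ᵥ (c : F) • v₀ = 2 := by
    intro c
    rw [smul_dotProduct, dotProduct_smul, hd₀, smul_eq_mul, smul_eq_mul,
      Units.val_inv_eq_inv_val]
    field_simp
  have hvmv : ∀ c : Fˣ, vecMulVec ((c : F) • v₀) (((c⁻¹ : Fˣ) : F) • w₀) = vecMulVec v₀ w₀ := by
    intro c
    ext i j
    simp only [vecMulVec_apply, Pi.smul_apply, smul_eq_mul, Units.val_inv_eq_inv_val]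
    have hc : (c : F)⁻¹ * (c : F) = 1 := inv_mul_cancel₀ c.ne_zero
    linear_combination (v₀ i * w₀ j) * hc
  refine ⟨Equiv.ofBijective
    (fun c => ⟨⟨((c : F) • v₀, ((c⁻¹ : Fˣ) : F) • w₀), hdotc c⟩, by rw [hvmv c, ← hx]⟩)
    ⟨?_, ?_⟩⟩
  · intro c c' h
    have h1 : (c : F) • v₀ = (c' : F) • v₀ := by
      have := congrArg (fun p => p.1.1.1) h
      simpa using this
    have := congrFun h1 i₀
    simp only [Pi.smul_apply, smul_eq_mul] at this
    exact Units.ext (mul_right_cancel₀ hi₀ this)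
  · rintro ⟨⟨⟨v, w⟩, hd⟩, hfib⟩
    have heq : vecMulVec v₀ w₀ = vecMulVec v w := by
      have : (1 : Matrix (Fin 4) (Fin 4) F) - vecMulVec v₀ w₀ =
          1 - vecMulVec v w := by rw [← hx, hfib]
      exact (sub_right_inj.mp this)
    obtain ⟨c, hc, hvc, hwc⟩ := aux_scale h2 hd₀ hd heq
    refine ⟨Units.mk0 c hc, ?_⟩
    apply Subtype.ext
    apply Subtype.ext
    simp only [Units.val_mk0]
    rw [← Units.val_mk0 (a := c) hc, ← Units.val_inv_eq_inv_val] at hwc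
    exact Prod.ext hvc.symm (by rw [hwc, Units.val_inv_eq_inv_val, Units.val_mk0])

end aux

theorem stmt_15 {F : Type*} [Field F] [Fintype F] [DecidableEq F]
    (hF : ringChar F ≠ 2) :
    Nat.card {x : Matrix (Fin 4) (Fin 4) F // x * x = 1 ∧ (x - 1).rank = 1} =
      (Fintype.card F) ^ 3 * ((Fintype.card F) ^ 2 + 1) * (Fintype.card F + 1) := by
  classical
  have h2 : (2 : F) ≠ 0 := Ring.two_ne_zero hF
  set S := {x : Matrix (Fin 4) (Fin 4) F // x * x = 1 ∧ (x - 1).rank = 1} with hS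
  set P := {p : (Fin 4 → F) × (Fin 4 → F) // p.2 ⬝ᵥ p.1 = 2} with hP
  set Φ : P → S := fun p => ⟨1 - vecMulVec p.1.1 p.1.2, aux_mem h2 p.1.1 p.1.2 p.2⟩ with hΦ
  have fibEquiv : ∀ x : S, Nonempty ({p : P // Φ p = x} ≃ Fˣ) := by
    intro x
    obtain ⟨e⟩ := aux_fiber_equiv h2 x.1 x.2.1 x.2.2
    refine ⟨(Equiv.subtypeEquivRight fun p => ?_).trans e.symm⟩
    constructor
    · intro h; exact congrArg Subtype.val h
    · intro h; exact Subtype.ext h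
  have ePS : P ≃ S × Fˣ :=
    ((Equiv.sigmaFiberEquiv Φ).symm.trans
      (Equiv.sigmaCongrRight fun x => Classical.choice (fibEquiv x))).trans
      (Equiv.sigmaEquivProd S Fˣ)
  have hcard : Nat.card S * (Fintype.card F - 1) =
      (Fintype.card F ^ 4 - 1) * Fintype.card F ^ 3 := by
    rw [← aux_card_P h2, Nat.card_congr ePS, Nat.card_prod]
    congr 1
    rw [Nat.card_eq_fintype_card, Fintype.card_units]
  have hq : 2 ≤ Fintype.card F := Fintype.one_lt_card
  obtain ⟨m, hm⟩ : ∃ m, Fintype.card F = m + 2 := ⟨Fintype.card F - 2, by omega⟩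
  rw [hm] at hcard ⊢
  have hsub : (m + 2) ^ 4 - 1 = m ^ 4 + 8 * m ^ 3 + 24 * m ^ 2 + 32 * m + 15 := by
    have : (m + 2) ^ 4 = m ^ 4 + 8 * m ^ 3 + 24 * m ^ 2 + 32 * m + 16 := by ring
    omega
  have hsub1 : m + 2 - 1 = m + 1 := by omega
  rw [hsub, hsub1] at hcard
  apply Nat.eq_of_mul_eq_mul_right (show 0 < m + 1 by omega)
  rw [hcard]
  ring
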